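/- Let d ≥ 3, fix ζ' ∈ ℝ^d with first coordinate ζ₁', and set ρ(ζ) = |ζ − ζ'|. Define B(ζ) = (d−2)·ζ₁·(ζ₁' − ζ₁)·ρ(ζ)^{−d} − ρ(ζ)^{2−d}. Then for every ζ with ζ₁ ≠ 0 and ζ ≠ ζ': ζ₁·ΔB(ζ) = 2·∂B/∂ζ₁(ζ). Equivalently, B satisfies ∇·(ζ₁⁻² ∇B) = 0 away from the point ζ'. -/

import Mathlib

/-- First partial derivative in direction `i` of a scalar function on `ℝ^d`. -/
noncomputable def pd {d : ℕ} (i : Fin d) (f : EuclideanSpace ℝ (Fin d) → ℝ)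
    (ζ : EuclideanSpace ℝ (Fin d)) : ℝ :=
  fderiv ℝ f ζ (EuclideanSpace.single i 1)

/-- Laplacian `Δ = Σᵢ ∂²/∂ζᵢ²` of a scalar function on `ℝ^d`. -/
noncomputable def lap {d : ℕ} (f : EuclideanSpace ℝ (Fin d) → ℝ)
    (ζ : EuclideanSpace ℝ (Fin d)) : ℝ :=
  ∑ i : Fin d, pd i (pd i f) ζ

namespace BHarmAux

variable {d : ℕ} (ζ' : EuclideanSpace ℝ (Fin d))

noncomputable def Nf (η : EuclideanSpace ℝ (Fin d)) : ℝ := ∑ j, (η j - ζ' j) ^ 2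

noncomputable def DN (η : EuclideanSpace ℝ (Fin d)) : EuclideanSpace ℝ (Fin d) →L[ℝ] ℝ :=
  ∑ j, (2 * (η j - ζ' j)) • (EuclideanSpace.proj j : EuclideanSpace ℝ (Fin d) →L[ℝ] ℝ)

noncomputable def Pf (e : ℝ) (η : EuclideanSpace ℝ (Fin d)) : ℝ := Nf ζ' η ^ e

lemma Nf_nonneg (η : EuclideanSpace ℝ (Fin d)) : 0 ≤ Nf ζ' η :=
  Finset.sum_nonneg fun _ _ => sq_nonneg _

lemma Nf_pos {η : EuclideanSpace ℝ (Fin d)} (h : η ≠ ζ') : 0 < Nf ζ' η := by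
  obtain ⟨j, hj⟩ : ∃ j, η j ≠ ζ' j := by
    by_contra hc
    push_neg at hc
    exact h (PiLp.ext hc)
  refine Finset.sum_pos' (fun i _ => sq_nonneg _) ⟨j, Finset.mem_univ j, ?_⟩
  have h0 : η j - ζ' j ≠ 0 := sub_ne_zero.mpr hj
  positivity

lemma dist_sq (η : EuclideanSpace ℝ (Fin d)) : dist η ζ' = Real.sqrt (Nf ζ' η) := by
  rw [EuclideanSpace.dist_eq]
  congr 1
  simp [Nf, Real.dist_eq, sq_abs]

lemma dist_rpow (η : EuclideanSpace ℝ (Fin d)) (r : ℝ) :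
    dist η ζ' ^ r = Pf ζ' (r / 2) η := by
  rw [dist_sq, Real.sqrt_eq_rpow, Pf, ← Real.rpow_mul (Nf_nonneg ζ' η)]
  ring_nf

lemma hasFDerivAt_coord (i : Fin d) (η : EuclideanSpace ℝ (Fin d)) :
    HasFDerivAt (fun η : EuclideanSpace ℝ (Fin d) => η i)
      (EuclideanSpace.proj i : EuclideanSpace ℝ (Fin d) →L[ℝ] ℝ) η := by
  have h1 := (EuclideanSpace.proj i : EuclideanSpace ℝ (Fin d) →L[ℝ] ℝ).hasFDerivAt (x := η)
  exact h1

lemma hasFDerivAt_Nf (η : EuclideanSpace ℝ (Fin d)) :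
    HasFDerivAt (Nf ζ') (DN ζ' η) η := by
  have h : ∀ j : Fin d, HasFDerivAt (fun η : EuclideanSpace ℝ (Fin d) => (η j - ζ' j) ^ 2)
      ((2 * (η j - ζ' j)) • (EuclideanSpace.proj j : EuclideanSpace ℝ (Fin d) →L[ℝ] ℝ)) η := by
    intro j
    have h1 := hasFDerivAt_coord j η
    have h2 := (h1.sub_const (ζ' j)).mul (h1.sub_const (ζ' j))
    have h3 : HasFDerivAt (fun η : EuclideanSpace ℝ (Fin d) => (η j - ζ' j) * (η j - ζ' j))
        ((2 * (η j - ζ' j)) • (EuclideanSpace.proj j : EuclideanSpace ℝ (Fin d) →L[ℝ] ℝ)) η := by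
      refine HasFDerivAt.congr_fderiv h2 ?_
      rw [← add_smul, two_mul]
    have h4 : (fun η : EuclideanSpace ℝ (Fin d) => (η j - ζ' j) ^ 2)
        = fun η : EuclideanSpace ℝ (Fin d) => (η j - ζ' j) * (η j - ζ' j) := by
      funext x; ring
    rw [h4]
    exact h3
  exact HasFDerivAt.fun_sum (fun j _ => h j)

lemma DN_apply (η : EuclideanSpace ℝ (Fin d)) (i : Fin d) :
    DN ζ' η (EuclideanSpace.single i 1) = 2 * (η i - ζ' i) := by
  simp [DN, PiLp.proj_apply, EuclideanSpace.single_apply]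

lemma hasFDerivAt_Pf (e : ℝ) {η : EuclideanSpace ℝ (Fin d)} (hη : η ≠ ζ') :
    HasFDerivAt (Pf ζ' e) ((e * Pf ζ' (e - 1) η) • DN ζ' η) η :=
  (hasFDerivAt_Nf ζ' η).rpow_const (Or.inl (Nf_pos ζ' hη).ne')

noncomputable def Gf (i0 : Fin d) (a c e1 : ℝ) (i : Fin d)
    (η : EuclideanSpace ℝ (Fin d)) : ℝ :=
  a * (if i0 = i then (1 : ℝ) else 0) * (c - 2 * η i0) * Pf ζ' e1 η
    + a * η i0 * (c - η i0) * (e1 * Pf ζ' (e1 - 1) η) * (2 * (η i - ζ' i))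
    - (e1 + 1) * Pf ζ' e1 η * (2 * (η i - ζ' i))

lemma pd_Bfun (i0 : Fin d) (a c e1 : ℝ) {η : EuclideanSpace ℝ (Fin d)} (hη : η ≠ ζ')
    (i : Fin d) :
    pd i (fun η => a * η i0 * (c - η i0) * Pf ζ' e1 η - Pf ζ' (e1 + 1) η) η
      = Gf ζ' i0 a c e1 i η := by
  have hu := hasFDerivAt_coord i0 η
  have h1 := (((hu.const_mul a).fun_mul (hu.const_sub c)).fun_mul (hasFDerivAt_Pf ζ' e1 hη)).fun_sub
      (hasFDerivAt_Pf ζ' (e1 + 1) hη)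
  rw [pd, h1.fderiv]
  simp only [ContinuousLinearMap.coe_sub', Pi.sub_apply, ContinuousLinearMap.add_apply,
    ContinuousLinearMap.coe_smul', Pi.smul_apply, ContinuousLinearMap.neg_apply,
    DN_apply, PiLp.proj_apply, EuclideanSpace.single_apply, smul_eq_mul, Gf]
  have he : e1 + 1 - 1 = e1 := by ring
  rw [he]
  ring


lemma pd_Gf (i0 : Fin d) (a c e1 : ℝ) {ζ : EuclideanSpace ℝ (Fin d)} (hζ : ζ ≠ ζ')
    (i : Fin d) :
    pd i (Gf ζ' i0 a c e1 i) ζ =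
      (-2 * a * Pf ζ' e1 ζ) * ((if i0 = i then (1:ℝ) else 0) * (if i0 = i then (1:ℝ) else 0))
      + (4 * a * (c - 2 * ζ i0) * e1 * Pf ζ' (e1 - 1) ζ)
          * ((if i0 = i then (1:ℝ) else 0) * (ζ i - ζ' i))
      + (4 * a * ζ i0 * (c - ζ i0) * e1 * (e1 - 1) * Pf ζ' (e1 - 2) ζ
          - 4 * (e1 + 1) * e1 * Pf ζ' (e1 - 1) ζ) * ((ζ i - ζ' i) * (ζ i - ζ' i))
      + (2 * a * ζ i0 * (c - ζ i0) * e1 * Pf ζ' (e1 - 1) ζ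
          - 2 * (e1 + 1) * Pf ζ' e1 ζ) := by
  have hu := hasFDerivAt_coord i0 ζ
  have hXi : HasFDerivAt (fun η : EuclideanSpace ℝ (Fin d) => 2 * (η i - ζ' i))
      ((2:ℝ) • (EuclideanSpace.proj i : EuclideanSpace ℝ (Fin d) →L[ℝ] ℝ)) ζ :=
    ((hasFDerivAt_coord i ζ).sub_const (ζ' i)).const_mul 2
  have ht1 := (((hu.const_mul 2).const_sub c).const_mul
      (a * (if i0 = i then (1:ℝ) else 0))).fun_mul (hasFDerivAt_Pf ζ' e1 hζ)
  have ht2 := ((((hu.const_mul a).fun_mul (hu.const_sub c)).fun_mul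
      ((hasFDerivAt_Pf ζ' (e1 - 1) hζ).const_mul e1)).fun_mul hXi)
  have ht3 := (((hasFDerivAt_Pf ζ' e1 hζ).const_mul (e1 + 1)).fun_mul hXi)
  have htot := (ht1.fun_add ht2).fun_sub ht3
  have hGf : Gf ζ' i0 a c e1 i = fun η =>
      a * (if i0 = i then (1 : ℝ) else 0) * (c - 2 * η i0) * Pf ζ' e1 η
        + a * η i0 * (c - η i0) * (e1 * Pf ζ' (e1 - 1) η) * (2 * (η i - ζ' i))
        - (e1 + 1) * Pf ζ' e1 η * (2 * (η i - ζ' i)) := rfl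
  rw [pd, hGf, htot.fderiv]
  simp only [ContinuousLinearMap.coe_sub', Pi.sub_apply, ContinuousLinearMap.add_apply,
    ContinuousLinearMap.coe_smul', Pi.smul_apply, ContinuousLinearMap.neg_apply,
    DN_apply, PiLp.proj_apply, EuclideanSpace.single_apply, smul_eq_mul]
  have he : e1 - 1 - 1 = e1 - 2 := by ring
  rw [he]
  by_cases hi : i0 = i <;> simp [hi] <;> ring

end BHarmAux

open Topology in
/-- The dipole part `B(ζ) = (d−2)·ζ₁·(ζ₁' − ζ₁)·ρ^{−d} − ρ^{2−d}`,
`ρ = |ζ − ζ'|`, satisfies `ζ₁·ΔB = 2·∂₁B` (equivalently `∇·(ζ₁⁻² ∇B) = 0`)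
away from `ζ'` (for `d ≥ 3`). -/
theorem B_is_L_harmonic (d : ℕ) (hd : 3 ≤ d)
    (ζ' : EuclideanSpace ℝ (Fin d))
    (B : EuclideanSpace ℝ (Fin d) → ℝ)
    (hB : ∀ η, B η =
      ((d : ℝ) - 2) * η (⟨0, by omega⟩ : Fin d) *
          (ζ' (⟨0, by omega⟩ : Fin d) - η (⟨0, by omega⟩ : Fin d)) *
          dist η ζ' ^ (-(d : ℝ)) -
        dist η ζ' ^ ((2 : ℝ) - d)) :
    ∀ ζ : EuclideanSpace ℝ (Fin d),
      ζ (⟨0, by omega⟩ : Fin d) ≠ 0 → ζ ≠ ζ' →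
        ζ (⟨0, by omega⟩ : Fin d) * lap B ζ =
          2 * pd (⟨0, by omega⟩ : Fin d) B ζ := by
  intro ζ hζ1 hζ
  set i0 : Fin d := ⟨0, by omega⟩ with hi0
  set a : ℝ := (d : ℝ) - 2 with ha
  set c : ℝ := ζ' i0 with hc
  set e1 : ℝ := -((d : ℝ) / 2) with he1
  have hBfun : B = fun η => a * η i0 * (c - η i0) * BHarmAux.Pf ζ' e1 η
      - BHarmAux.Pf ζ' (e1 + 1) η := by
    funext η
    have h1 : dist η ζ' ^ (-(d : ℝ)) = BHarmAux.Pf ζ' e1 η := by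
      rw [BHarmAux.dist_rpow, show (-(d:ℝ))/2 = e1 by rw [he1]; ring]
    have h2 : dist η ζ' ^ ((2:ℝ) - d) = BHarmAux.Pf ζ' (e1 + 1) η := by
      rw [BHarmAux.dist_rpow, show ((2:ℝ) - d)/2 = e1 + 1 by rw [he1]; ring]
    rw [hB η, h1, h2]
  have hpdB : ∀ η, η ≠ ζ' → ∀ i, pd i B η = BHarmAux.Gf ζ' i0 a c e1 i η := by
    intro η hη i
    rw [hBfun]
    exact BHarmAux.pd_Bfun ζ' i0 a c e1 hη i
  have h2nd : ∀ i : Fin d, pd i (pd i B) ζ =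
      (-2 * a * BHarmAux.Pf ζ' e1 ζ)
          * ((if i0 = i then (1:ℝ) else 0) * (if i0 = i then (1:ℝ) else 0))
      + (4 * a * (c - 2 * ζ i0) * e1 * BHarmAux.Pf ζ' (e1 - 1) ζ)
          * ((if i0 = i then (1:ℝ) else 0) * (ζ i - ζ' i))
      + (4 * a * ζ i0 * (c - ζ i0) * e1 * (e1 - 1) * BHarmAux.Pf ζ' (e1 - 2) ζ
          - 4 * (e1 + 1) * e1 * BHarmAux.Pf ζ' (e1 - 1) ζ) * ((ζ i - ζ' i) * (ζ i - ζ' i))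
      + (2 * a * ζ i0 * (c - ζ i0) * e1 * BHarmAux.Pf ζ' (e1 - 1) ζ
          - 2 * (e1 + 1) * BHarmAux.Pf ζ' e1 ζ) := by
    intro i
    have hmem : {ζ'}ᶜ ∈ 𝓝 ζ := IsOpen.mem_nhds isOpen_compl_singleton (by simpa using hζ)
    have hev : pd i B =ᶠ[𝓝 ζ] BHarmAux.Gf ζ' i0 a c e1 i := by
      filter_upwards [hmem] with η hη
      exact hpdB η hη i
    have hfd := hev.fderiv_eq (𝕜 := ℝ)
    have hstep : pd i (pd i B) ζ = pd i (BHarmAux.Gf ζ' i0 a c e1 i) ζ :=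
      congrArg (fun L : EuclideanSpace ℝ (Fin d) →L[ℝ] ℝ => L (EuclideanSpace.single i 1)) hfd
    rw [hstep, BHarmAux.pd_Gf ζ' i0 a c e1 hζ i]
  have hs1 : (∑ i : Fin d, (if i0 = i then (1:ℝ) else 0) * (if i0 = i then (1:ℝ) else 0))
      = 1 := by simp
  have hs2 : (∑ i : Fin d, (if i0 = i then (1:ℝ) else 0) * (ζ i - ζ' i))
      = ζ i0 - ζ' i0 := by simp
  have hs3 : (∑ i : Fin d, (ζ i - ζ' i) * (ζ i - ζ' i)) = BHarmAux.Nf ζ' ζ := by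
    simp [BHarmAux.Nf, sq]
  have hlap : lap B ζ =
      (-2 * a * BHarmAux.Pf ζ' e1 ζ) * 1
      + (4 * a * (c - 2 * ζ i0) * e1 * BHarmAux.Pf ζ' (e1 - 1) ζ) * (ζ i0 - ζ' i0)
      + (4 * a * ζ i0 * (c - ζ i0) * e1 * (e1 - 1) * BHarmAux.Pf ζ' (e1 - 2) ζ
          - 4 * (e1 + 1) * e1 * BHarmAux.Pf ζ' (e1 - 1) ζ) * BHarmAux.Nf ζ' ζ
      + (d : ℝ) * (2 * a * ζ i0 * (c - ζ i0) * e1 * BHarmAux.Pf ζ' (e1 - 1) ζ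
          - 2 * (e1 + 1) * BHarmAux.Pf ζ' e1 ζ) := by
    rw [lap, Finset.sum_congr rfl fun i _ => h2nd i]
    simp only [Finset.sum_add_distrib, ← Finset.mul_sum, Finset.sum_const,
      Finset.card_univ, Fintype.card_fin, nsmul_eq_mul]
    rw [hs1, hs2, hs3]
  have hN := BHarmAux.Nf_pos ζ' hζ
  have hP1 : BHarmAux.Pf ζ' e1 ζ = BHarmAux.Pf ζ' (e1 - 2) ζ * BHarmAux.Nf ζ' ζ
      * BHarmAux.Nf ζ' ζ := by
    rw [BHarmAux.Pf, BHarmAux.Pf, show e1 = e1 - 2 + 1 + 1 by ring,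
      Real.rpow_add hN, Real.rpow_add hN, Real.rpow_one]
    ring_nf
  have hP2 : BHarmAux.Pf ζ' (e1 - 1) ζ = BHarmAux.Pf ζ' (e1 - 2) ζ * BHarmAux.Nf ζ' ζ := by
    rw [BHarmAux.Pf, BHarmAux.Pf, show e1 - 1 = e1 - 2 + 1 by ring,
      Real.rpow_add hN, Real.rpow_one]
  have hpd0 : pd i0 B ζ = a * (c - 2 * ζ i0) * BHarmAux.Pf ζ' e1 ζ
      + a * ζ i0 * (c - ζ i0) * (e1 * BHarmAux.Pf ζ' (e1 - 1) ζ) * (2 * (ζ i0 - ζ' i0))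
      - (e1 + 1) * BHarmAux.Pf ζ' e1 ζ * (2 * (ζ i0 - ζ' i0)) := by
    rw [hpdB ζ hζ i0]
    simp [BHarmAux.Gf]
  rw [hlap, hpd0, hP1, hP2, ← hc, he1, ha]
  ring
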